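/- Let ω be a normalized radial weight of class R on the unit disc and A analytic in D. If the integral operator S_A(f)(z) = ∫_0^z (∫_0^ζ f(w)A(w) dw) dζ is bounded on the Bloch space B, then A ∈ L_1, i.e., sup_{z∈D} |A(z)|(1-|z|^2)^2 log(e/(1-|z|)) < ∞. -/

import Mathlib

open Metric Set Real MeasureTheory

/-- `ω̂(r) = ∫_r^1 ω(s) ds`. -/
noncomputable def omegaHat (ω : ℝ → ℝ) (r : ℝ) : ℝ := ∫ s in r..1, ω s

/-- The derivative of `S_A(f)` at `z`, i.e. `∫_0^z f(w) A(w) dw` parametrized along the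
segment from the origin. -/
noncomputable def SAprime (A f : ℂ → ℂ) (z : ℂ) : ℂ :=
  z * ∫ t in (0 : ℝ)..1, f ((t : ℂ) * z) * A ((t : ℂ) * z)


lemma primitive_hasDerivAt {h : ℂ → ℂ} (hh : DifferentiableOn ℂ h (ball (0:ℂ) 1))
    {z : ℂ} (hz : z ∈ ball (0:ℂ) 1) :
    HasDerivAt (fun w : ℂ => w * ∫ t in (0:ℝ)..1, h ((t:ℂ) * w)) (h z) z := by
  rw [mem_ball_zero_iff] at hz
  set r : ℝ := (1 + ‖z‖) / 2 with hrdef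
  have hzr : ‖z‖ < r := by rw [hrdef]; linarith
  have hr1 : r < 1 := by rw [hrdef]; linarith
  have hr0 : 0 < r := lt_of_le_of_lt (norm_nonneg z) hzr
  have hsub : closedBall (0:ℂ) r ⊆ ball (0:ℂ) 1 := by
    intro w hw
    rw [mem_closedBall_zero_iff] at hw
    rw [mem_ball_zero_iff]
    exact lt_of_le_of_lt hw hr1
  have han : AnalyticOnNhd ℂ h (ball (0:ℂ) 1) := hh.analyticOnNhd isOpen_ball
  have hcont : ContinuousOn h (closedBall (0:ℂ) r) := (hh.continuousOn).mono hsub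
  have hcont' : ContinuousOn (deriv h) (closedBall (0:ℂ) r) :=
    (han.deriv.continuousOn).mono hsub
  obtain ⟨M1, hM1⟩ := (isCompact_closedBall (0:ℂ) r).exists_bound_of_continuousOn hcont
  obtain ⟨M2, hM2⟩ := (isCompact_closedBall (0:ℂ) r).exists_bound_of_continuousOn hcont'
  have hM2' : 0 ≤ M2 := le_trans (norm_nonneg _) (hM2 0 (mem_closedBall_self hr0.le))
  set ε : ℝ := r - ‖z‖ with hεdef
  have hε : 0 < ε := by rw [hεdef]; linarith
  have hmem : ∀ t : ℝ, t ∈ Set.Icc (0:ℝ) 1 → ∀ x : ℂ, ‖x‖ ≤ r →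
      (t:ℂ) * x ∈ closedBall (0:ℂ) r := by
    intro t ht x hx
    rw [mem_closedBall_zero_iff, norm_mul, Complex.norm_real, Real.norm_eq_abs,
      abs_of_nonneg ht.1]
    calc t * ‖x‖ ≤ 1 * r := mul_le_mul ht.2 hx (norm_nonneg x) zero_le_one
      _ = r := one_mul r
  have hballr : ∀ x ∈ ball z ε, ‖x‖ ≤ r := by
    intro x hx
    rw [mem_ball, dist_eq_norm] at hx
    calc ‖x‖ = ‖x - z + z‖ := by ring_nf
      _ ≤ ‖x - z‖ + ‖z‖ := norm_add_le _ _
      _ ≤ ε + ‖z‖ := by linarith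
      _ = r := by rw [hεdef]; ring
  have hcontF : ∀ x : ℂ, ‖x‖ ≤ r →
      ContinuousOn (fun t : ℝ => x * h ((t:ℂ) * x)) (Set.Icc 0 1) := by
    intro x hx
    apply ContinuousOn.mul continuousOn_const
    apply hcont.comp (Complex.continuous_ofReal.continuousOn.mul continuousOn_const)
    intro t ht
    exact hmem t ht x hx
  have hcontF' : ContinuousOn
      (fun t : ℝ => h ((t:ℂ) * z) + z * (deriv h ((t:ℂ) * z) * (t:ℂ))) (Set.Icc 0 1) := by
    have hmaps : Set.MapsTo (fun t : ℝ => (t:ℂ) * z) (Set.Icc 0 1) (closedBall (0:ℂ) r) :=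
      fun t ht => hmem t ht z hzr.le
    have h1 : ContinuousOn (fun t : ℝ => ((t:ℂ) * z)) (Set.Icc 0 1) :=
      Complex.continuous_ofReal.continuousOn.mul continuousOn_const
    exact (hcont.comp h1 hmaps).add (continuousOn_const.mul
      ((hcont'.comp h1 hmaps).mul Complex.continuous_ofReal.continuousOn))
  have hIoc : Set.uIoc (0:ℝ) 1 = Set.Ioc (0:ℝ) 1 := Set.uIoc_of_le (by norm_num)
  have hF_meas : ∀ᶠ x in nhds z, AEStronglyMeasurable (fun t : ℝ => x * h ((t:ℂ) * x))
      (volume.restrict (Set.uIoc (0:ℝ) 1)) := by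
    filter_upwards [ball_mem_nhds z hε] with x hx
    rw [hIoc]
    exact ((hcontF x (hballr x hx)).mono Set.Ioc_subset_Icc_self).aestronglyMeasurable
      measurableSet_Ioc
  have hF_int : IntervalIntegrable (fun t : ℝ => z * h ((t:ℂ) * z)) volume 0 1 :=
    (hcontF z hzr.le).intervalIntegrable_of_Icc (by norm_num)
  have hF'_meas : AEStronglyMeasurable
      (fun t : ℝ => h ((t:ℂ) * z) + z * (deriv h ((t:ℂ) * z) * (t:ℂ)))
      (volume.restrict (Set.uIoc (0:ℝ) 1)) := by
    rw [hIoc]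
    exact (hcontF'.mono Set.Ioc_subset_Icc_self).aestronglyMeasurable measurableSet_Ioc
  have h_bound : ∀ᵐ t ∂(volume : Measure ℝ), t ∈ Set.uIoc (0:ℝ) 1 → ∀ x ∈ ball z ε,
      ‖h ((t:ℂ) * x) + x * (deriv h ((t:ℂ) * x) * (t:ℂ))‖ ≤ M1 + r * M2 := by
    apply Filter.Eventually.of_forall
    intro t ht x hx
    rw [hIoc] at ht
    have ht' : t ∈ Set.Icc (0:ℝ) 1 := ⟨ht.1.le, ht.2⟩
    have hxr := hballr x hx
    have htx : (t:ℂ) * x ∈ closedBall (0:ℂ) r := hmem t ht' x hxr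
    calc ‖h ((t:ℂ) * x) + x * (deriv h ((t:ℂ) * x) * (t:ℂ))‖
        ≤ ‖h ((t:ℂ) * x)‖ + ‖x * (deriv h ((t:ℂ) * x) * (t:ℂ))‖ := norm_add_le _ _
      _ ≤ M1 + r * M2 := by
          have h2 : ‖x * (deriv h ((t:ℂ) * x) * (t:ℂ))‖ ≤ r * M2 := by
            rw [norm_mul, norm_mul, Complex.norm_real, Real.norm_eq_abs, abs_of_nonneg ht'.1]
            calc ‖x‖ * (‖deriv h ((t:ℂ) * x)‖ * t) ≤ r * (M2 * 1) :=
                  mul_le_mul hxr (mul_le_mul (hM2 _ htx) ht'.2 ht'.1 hM2')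
                    (mul_nonneg (norm_nonneg _) ht'.1) hr0.le
              _ = r * M2 := by ring
          have h1 := hM1 _ htx
          linarith
  have h_diff : ∀ᵐ t ∂(volume : Measure ℝ), t ∈ Set.uIoc (0:ℝ) 1 → ∀ x ∈ ball z ε,
      HasDerivAt (fun y : ℂ => y * h ((t:ℂ) * y))
        (h ((t:ℂ) * x) + x * (deriv h ((t:ℂ) * x) * (t:ℂ))) x := by
    apply Filter.Eventually.of_forall
    intro t ht x hx
    rw [hIoc] at ht
    have ht' : t ∈ Set.Icc (0:ℝ) 1 := ⟨ht.1.le, ht.2⟩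
    have htx : (t:ℂ) * x ∈ ball (0:ℂ) 1 := hsub (hmem t ht' x (hballr x hx))
    have hd : HasDerivAt h (deriv h ((t:ℂ) * x)) ((t:ℂ) * x) :=
      (hh.differentiableAt (isOpen_ball.mem_nhds htx)).hasDerivAt
    have hinner : HasDerivAt (fun y : ℂ => (t:ℂ) * y) (t:ℂ) x := by
      simpa using (hasDerivAt_id x).const_mul (t:ℂ)
    have hcomp : HasDerivAt (fun y : ℂ => h ((t:ℂ) * y)) (deriv h ((t:ℂ) * x) * (t:ℂ)) x :=
      HasDerivAt.comp x hd hinner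
    simpa [Pi.mul_def] using (hasDerivAt_id x).mul hcomp
  obtain ⟨-, hkey⟩ := intervalIntegral.hasDerivAt_integral_of_dominated_loc_of_deriv_le
    (F := fun (x : ℂ) (t : ℝ) => x * h ((t:ℂ) * x))
    (F' := fun (x : ℂ) (t : ℝ) => h ((t:ℂ) * x) + x * (deriv h ((t:ℂ) * x) * (t:ℂ)))
    (ball_mem_nhds z hε) hF_meas hF_int hF'_meas h_bound intervalIntegrable_const h_diff
  have heq : (fun x : ℂ => ∫ t in (0:ℝ)..1, x * h ((t:ℂ) * x)) =
      fun x : ℂ => x * ∫ t in (0:ℝ)..1, h ((t:ℂ) * x) := by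
    funext x
    exact intervalIntegral.integral_const_mul x _
  have hval : (∫ t in (0:ℝ)..1, (h ((t:ℂ) * z) + z * (deriv h ((t:ℂ) * z) * (t:ℂ)))) = h z := by
    have hderiv : ∀ t ∈ Set.uIcc (0:ℝ) 1, HasDerivAt (fun s : ℝ => (s:ℂ) * h ((s:ℂ) * z))
        (h ((t:ℂ) * z) + z * (deriv h ((t:ℂ) * z) * (t:ℂ))) t := by
      intro t ht
      rw [Set.uIcc_of_le (by norm_num : (0:ℝ) ≤ 1)] at ht
      have htz : (t:ℂ) * z ∈ ball (0:ℂ) 1 := hsub (hmem t ht z hzr.le)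
      have hd : HasDerivAt h (deriv h ((t:ℂ) * z)) ((t:ℂ) * z) :=
        (hh.differentiableAt (isOpen_ball.mem_nhds htz)).hasDerivAt
      have hinner : HasDerivAt (fun u : ℂ => u * z) z (t:ℂ) := by
        simpa using (hasDerivAt_id ((t:ℂ))).mul_const z
      have hcomp : HasDerivAt (fun u : ℂ => h (u * z)) (deriv h ((t:ℂ) * z) * z) (t:ℂ) :=
        HasDerivAt.comp (t:ℂ) hd hinner
      have hprod : HasDerivAt (fun u : ℂ => u * h (u * z))
          (1 * h ((t:ℂ) * z) + (t:ℂ) * (deriv h ((t:ℂ) * z) * z)) (t:ℂ) :=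
        (hasDerivAt_id ((t:ℂ))).mul hcomp
      have := hprod.comp_ofReal
      convert this using 1
      ring
    have hFTC := intervalIntegral.integral_eq_sub_of_hasDerivAt hderiv
      (hcontF'.intervalIntegrable_of_Icc (by norm_num))
    rw [hFTC]
    norm_num
  rw [heq] at hkey
  have hkey2 : HasDerivAt (fun x : ℂ => x * ∫ t in (0:ℝ)..1, h ((t:ℂ) * x))
      (∫ t in (0:ℝ)..1, (h ((t:ℂ) * z) + z * (deriv h ((t:ℂ) * z) * (t:ℂ)))) z := hkey
  rwa [hval] at hkey2

theorem stmt18 (ω : ℝ → ℝ) (A : ℂ → ℂ)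
    (hωmeas : Measurable ω) (hωpos : ∀ r ∈ Set.Ioo (0 : ℝ) 1, 0 ≤ ω r)
    -- ω is normalized : ω₁ = 1/2
    (hnorm : ∫ r in (0 : ℝ)..1, r * ω r = 1 / 2)
    -- ω belongs to the class R of regular weights
    (hreg : ∃ C α β : ℝ, 0 < C ∧ 0 < α ∧ α ≤ β ∧
      ∀ r t : ℝ, 0 ≤ r → r ≤ t → t < 1 →
        C⁻¹ * ((1 - r) / (1 - t)) ^ α * omegaHat ω t ≤ omegaHat ω r ∧
        omegaHat ω r ≤ C * ((1 - r) / (1 - t)) ^ β * omegaHat ω t)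
    (hA : DifferentiableOn ℂ A (ball (0 : ℂ) 1))
    -- S_A : B → B is bounded
    (hbdd : ∃ C : ℝ, ∀ (f : ℂ → ℂ) (B : ℝ), DifferentiableOn ℂ f (ball (0 : ℂ) 1) →
      ‖f 0‖ ≤ B → (∀ z ∈ ball (0 : ℂ) 1, ‖deriv f z‖ * (1 - ‖z‖ ^ 2) ≤ B) →
      ∀ z ∈ ball (0 : ℂ) 1, ‖SAprime A f z‖ * (1 - ‖z‖ ^ 2) ≤ C * B) :
    ∃ C : ℝ, ∀ z ∈ ball (0 : ℂ) 1,
      ‖A z‖ * (1 - ‖z‖ ^ 2) ^ 2 * Real.log (Real.exp 1 / (1 - ‖z‖)) ≤ C := by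
  obtain ⟨C, hC⟩ := hbdd
  refine ⟨64 * C, ?_⟩
  intro z hz
  have hz' : ‖z‖ < 1 := mem_ball_zero_iff.mp hz
  have hs0 : 0 ≤ ‖z‖ := norm_nonneg z
  set a : ℂ := (starRingEnd ℂ) z with hadef
  have hanorm : ‖a‖ = ‖z‖ := by rw [hadef]; exact RCLike.norm_conj z
  set f : ℂ → ℂ := fun w => 1 - Complex.log (1 - a * w) with hfdef
  -- derivative of the test function
  have hfd : ∀ w ∈ ball (0:ℂ) 1, HasDerivAt f ((1 - a * w)⁻¹ * a) w := by
    intro w hw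
    rw [mem_ball_zero_iff] at hw
    have haw : ‖a * w‖ < 1 := by
      rw [norm_mul, hanorm]
      calc ‖z‖ * ‖w‖ ≤ 1 * ‖w‖ := by gcongr
        _ = ‖w‖ := one_mul _
        _ < 1 := hw
    have hslit : (1 - a * w) ∈ Complex.slitPlane := by
      left
      have h1 : (a * w).re ≤ ‖a * w‖ := by
        exact Complex.re_le_norm _
      simp only [Complex.sub_re, Complex.one_re]
      linarith
    have hu : HasDerivAt (fun w : ℂ => 1 - a * w) (-a) w := by
      simpa using ((hasDerivAt_id w).const_mul a).const_sub 1
    have hlog : HasDerivAt Complex.log (1 - a * w)⁻¹ (1 - a * w) :=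
      Complex.hasDerivAt_log hslit
    have hcomp : HasDerivAt (fun w : ℂ => Complex.log (1 - a * w))
        ((1 - a * w)⁻¹ * (-a)) w := by have := HasDerivAt.comp w hlog hu; exact this
    have := hcomp.const_sub 1
    rw [hfdef]
    exact this.congr_deriv (by ring)
  have hfdiff : DifferentiableOn ℂ f (ball (0:ℂ) 1) :=
    fun w hw => ((hfd w hw).differentiableAt).differentiableWithinAt
  have hf0 : ‖f 0‖ ≤ 2 := by
    simp [hfdef, Complex.log_one]
  have hfB : ∀ w ∈ ball (0:ℂ) 1, ‖deriv f w‖ * (1 - ‖w‖ ^ 2) ≤ 2 := by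
    intro w hw
    rw [(hfd w hw).deriv]
    rw [mem_ball_zero_iff] at hw
    have hq0 : 0 ≤ ‖w‖ := norm_nonneg w
    have hd : 1 - ‖z‖ * ‖w‖ ≤ ‖1 - a * w‖ := by
      calc 1 - ‖z‖ * ‖w‖ = ‖(1:ℂ)‖ - ‖a * w‖ := by
            rw [norm_one, norm_mul, hanorm]
        _ ≤ ‖1 - a * w‖ := norm_sub_norm_le _ _
    have hdpos : 0 < ‖1 - a * w‖ := by
      have : 0 < 1 - ‖z‖ * ‖w‖ := by nlinarith
      linarith
    rw [norm_mul, norm_inv, hanorm]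
    rw [inv_mul_eq_div, div_mul_eq_mul_div, div_le_iff₀ hdpos]
    calc ‖z‖ * (1 - ‖w‖ ^ 2) ≤ 2 * (1 - ‖z‖ * ‖w‖) := by nlinarith [sq_nonneg (1 - ‖w‖)]
      _ ≤ 2 * ‖1 - a * w‖ := by linarith
  have hg := hC f 2 hfdiff hf0 hfB
  have hK : 0 ≤ C * 2 := by
    have h0 := hg 0 (mem_ball_self one_pos)
    have h1 : (1 : ℝ) - ‖(0:ℂ)‖ ^ 2 = 1 := by simp
    rw [h1, mul_one] at h0
    exact le_trans (norm_nonneg _) h0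
  -- the product f * A and its primitive
  set h : ℂ → ℂ := fun w => f w * A w with hhdef
  have hh : DifferentiableOn ℂ h (ball (0:ℂ) 1) := hfdiff.mul hA
  set g : ℂ → ℂ := fun w => w * ∫ t in (0:ℝ)..1, h ((t:ℂ) * w) with hgdef
  have hgSA : ∀ w, SAprime A f w = g w := fun w => rfl
  have hgd : ∀ w ∈ ball (0:ℂ) 1, HasDerivAt g (h w) w :=
    fun w hw => primitive_hasDerivAt hh hw
  obtain ⟨R, hRdef⟩ : ∃ R : ℝ, R = (1 - ‖z‖) / 2 := ⟨_, rfl⟩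
  have hR : 0 < R := by linarith
  have hsub2 : closedBall z R ⊆ ball (0:ℂ) 1 := by
    intro w hw
    rw [mem_closedBall, dist_eq_norm] at hw
    rw [mem_ball_zero_iff]
    calc ‖w‖ = ‖w - z + z‖ := by ring_nf
      _ ≤ ‖w - z‖ + ‖z‖ := norm_add_le _ _
      _ ≤ R + ‖z‖ := by linarith
      _ < 1 := by linarith
  have hdiffcl : DiffContOnCl ℂ g (ball z R) := by
    apply DifferentiableOn.diffContOnCl
    rw [closure_ball z hR.ne']
    exact fun w hw => ((hgd w (hsub2 hw)).differentiableAt).differentiableWithinAt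
  have hsphere : ∀ w ∈ sphere z R, ‖g w‖ ≤ (C * 2) / R := by
    intro w hw
    rw [mem_sphere, dist_eq_norm] at hw
    have hwz : ‖w‖ ≤ ‖z‖ + R := by
      calc ‖w‖ = ‖w - z + z‖ := by ring_nf
        _ ≤ ‖w - z‖ + ‖z‖ := norm_add_le _ _
        _ = ‖z‖ + R := by rw [hw]; ring
    have hwball : w ∈ ball (0:ℂ) 1 := hsub2 (by rw [mem_closedBall, dist_eq_norm, hw])
    have hw1 : ‖w‖ < 1 := mem_ball_zero_iff.mp hwball
    have hRw : R ≤ 1 - ‖w‖ ^ 2 := by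
      have h1 : R ≤ 1 - ‖w‖ := by linarith
      nlinarith [norm_nonneg w]
    have := hg w hwball
    rw [hgSA] at this
    rw [le_div_iff₀ hR]
    calc ‖g w‖ * R ≤ ‖g w‖ * (1 - ‖w‖ ^ 2) := by gcongr
      _ ≤ C * 2 := this
  have hderivle : ‖deriv g z‖ ≤ ((C * 2) / R) / R :=
    Complex.norm_deriv_le_of_forall_mem_sphere_norm_le hR hdiffcl hsphere
  have hgz : deriv g z = h z := (hgd z hz).deriv
  -- compute f z
  have hfz : f z = ((1 - Real.log (1 - ‖z‖ ^ 2) : ℝ) : ℂ) := by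
    have h1 : a * z = ((‖z‖ ^ 2 : ℝ) : ℂ) := by
      rw [hadef, mul_comm, Complex.mul_conj, Complex.normSq_eq_norm_sq]
    have h2 : (1 : ℂ) - a * z = (((1 - ‖z‖ ^ 2 : ℝ)) : ℂ) := by rw [h1]; push_cast; ring
    rw [hfdef]
    simp only [h2]
    rw [← Complex.ofReal_log (by nlinarith : (0:ℝ) ≤ 1 - ‖z‖ ^ 2)]
    push_cast
    try rfl
    try ring
  have hlogz : Real.log (1 - ‖z‖ ^ 2) ≤ 0 :=
    Real.log_nonpos (by nlinarith) (by nlinarith)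
  set V : ℝ := 1 - Real.log (1 - ‖z‖ ^ 2) with hVdef
  have hfznorm : ‖f z‖ = V := by
    rw [hfz, Complex.norm_real, Real.norm_eq_abs, abs_of_nonneg (by rw [hVdef] at *; linarith)]
  -- the log inequality
  have hL : Real.log (Real.exp 1 / (1 - ‖z‖)) ≤ 2 * V := by
    have h1s : (0:ℝ) < 1 - ‖z‖ := by linarith
    have h1s' : (0:ℝ) < 1 + ‖z‖ := by linarith
    have e1 : Real.log (Real.exp 1 / (1 - ‖z‖)) = 1 - Real.log (1 - ‖z‖) := by
      rw [Real.log_div (Real.exp_ne_zero 1) h1s.ne', Real.log_exp]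
    have e2 : Real.log (1 - ‖z‖ ^ 2) = Real.log (1 - ‖z‖) + Real.log (1 + ‖z‖) := by
      rw [← Real.log_mul h1s.ne' h1s'.ne']
      ring_nf
    have i1 : Real.log (1 + ‖z‖) ≤ ‖z‖ := by
      have := Real.log_le_sub_one_of_pos h1s'
      linarith
    have i2 : Real.log (1 - ‖z‖) ≤ -‖z‖ := by
      have := Real.log_le_sub_one_of_pos h1s
      linarith
    rw [e1, hVdef, e2]
    linarith
  -- final computation
  have hfA : V * ‖A z‖ ≤ ((C * 2) / R) / R := by
    calc V * ‖A z‖ = ‖f z * A z‖ := by rw [norm_mul, hfznorm]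
      _ = ‖deriv g z‖ := by rw [hgz]
      _ ≤ ((C * 2) / R) / R := hderivle
  have hD : (1 - ‖z‖ ^ 2) ^ 2 ≤ 16 * (R * R) := by
    have h4 : (0:ℝ) ≤ (1 - ‖z‖) ^ 2 * (4 - (1 + ‖z‖) ^ 2) :=
      mul_nonneg (sq_nonneg _) (by nlinarith)
    rw [hRdef]
    nlinarith [h4]
  have hD0 : (0:ℝ) ≤ (1 - ‖z‖ ^ 2) ^ 2 := sq_nonneg _
  have hRne : R ≠ 0 := hR.ne'
  calc ‖A z‖ * (1 - ‖z‖ ^ 2) ^ 2 * Real.log (Real.exp 1 / (1 - ‖z‖))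
      ≤ ‖A z‖ * (1 - ‖z‖ ^ 2) ^ 2 * (2 * V) := by
        apply mul_le_mul_of_nonneg_left hL (by positivity)
    _ = 2 * (V * ‖A z‖) * (1 - ‖z‖ ^ 2) ^ 2 := by ring
    _ ≤ 2 * (((C * 2) / R) / R) * (1 - ‖z‖ ^ 2) ^ 2 := by gcongr
    _ = 2 * (C * 2) * (1 - ‖z‖ ^ 2) ^ 2 / (R * R) := by ring
    _ ≤ 2 * (C * 2) * (16 * (R * R)) / (R * R) := by gcongr
    _ = 64 * C := by field_simp; ring
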